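/- Let G be a finite simple graph on l vertices and let m : L_G → ℚ be defined by m(π) = (-1)^{l-|π|} μ(0̂, π), where μ is the Möbius function of the bond lattice. Then m satisfies the recurrence: m(0̂) = 1, and for every π ≠ 0̂, m(π) = Σ_{π → π′} w(π, π′) m(π′), where the sum is over elements π′ covered by π and w(π, π′) = (1/d(π)) · e(S′_k, S′_{k+1})/e(S_k) as defined from the split block S_k = S′_k ⊔ S′_{k+1}. -/

import Mathlib

open Finset Polynomial
open scoped Classical

variable {V : Type} [Fintype V] [DecidableEq V]

/-- A bond-lattice element: a partition of the vertex set all of whose blocks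
induce connected subgraphs. -/
def IsBondPartition (G : SimpleGraph V) (π : Finset (Finset V)) : Prop :=
  (∀ v : V, ∃! B, B ∈ π ∧ v ∈ B) ∧
  ∀ B ∈ π, (G.induce (B : Set V)).Connected

noncomputable def bondFinset (G : SimpleGraph V) : Finset (Finset (Finset V)) :=
  Finset.univ.filter (IsBondPartition G)

/-- The partition of the vertex set into singletons. -/
def botPartition (V : Type) [Fintype V] [DecidableEq V] : Finset (Finset V) :=
  Finset.univ.image fun v => ({v} : Finset V)

/-- `Refines π σ` : every block of `π` is contained in some block of `σ`. -/
def Refines (π σ : Finset (Finset V)) : Prop :=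
  ∀ B ∈ π, ∃ C ∈ σ, B ⊆ C

/-- A polynomial is the chromatic polynomial of `G` if it counts proper colorings. -/
def IsChromaticPolynomial (G : SimpleGraph V) (P : Polynomial ℤ) : Prop :=
  ∀ n : ℕ, P.eval (n : ℤ) = Nat.card (G.Coloring (Fin n))

/-- Number of edges of `G` with both endpoints in `S`. -/
noncomputable def eIn (G : SimpleGraph V) (S : Finset V) : ℕ :=
  (Finset.univ.filter fun e : Sym2 V => e ∈ G.edgeSet ∧ ∀ v ∈ e, v ∈ S).card

/-- Number of edges of `G` with one endpoint in `S` and the other in `S'`. -/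
noncomputable def eBetween (G : SimpleGraph V) (S S' : Finset V) : ℕ :=
  (Finset.univ.filter fun e : Sym2 V =>
    e ∈ G.edgeSet ∧ ∃ a ∈ S, ∃ b ∈ S', e = s(a, b)).card

/-- `π` covers `π'` in the bond lattice. -/
def BondCovers (G : SimpleGraph V) (π π' : Finset (Finset V)) : Prop :=
  IsBondPartition G π ∧ IsBondPartition G π' ∧ Refines π' π ∧ π'.card = π.card + 1

/-- Number of non-singleton blocks. -/
def dcount (π : Finset (Finset V)) : ℕ := (π.filter fun B => 1 < B.card).card

/-- The weight of a covering edge `π → π'`: if `π'` splits the block `S` of `π`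
into `S₁ ⊔ S₂`, this is `(1/d(π)) ⬝ e(S₁,S₂)/e(S)`. -/
noncomputable def covWeight (G : SimpleGraph V) (π π' : Finset (Finset V)) : ℚ :=
  (1 / (dcount π : ℚ)) *
    ((∑ A ∈ π' \ π, ∑ B ∈ π' \ π, if A = B then 0 else (eBetween G A B : ℚ)) / 2) /
    (∑ S ∈ π \ π', (eIn G S : ℚ))

/-- The weight of a path: the product of the weights of its edges. -/
noncomputable def pathWeight (G : SimpleGraph V) : List (Finset (Finset V)) → ℚ
  | [] => 1
  | [_] => 1
  | a :: b :: rest => covWeight G a b * pathWeight G (b :: rest)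

set_option linter.unusedSectionVars false

section Aux

variable {G : SimpleGraph V} {π σ : Finset (Finset V)} {B C S : Finset V} {u v : V}

/-- partition predicate -/
def PPart (π : Finset (Finset V)) : Prop :=
  (∀ v : V, ∃! B, B ∈ π ∧ v ∈ B) ∧ ∅ ∉ π

noncomputable def blk (π : Finset (Finset V)) (v : V) : Finset V :=
  if h : ∃ B, B ∈ π ∧ v ∈ B then h.choose else ∅

lemma IsBondPartition.ppart (h : IsBondPartition G π) : PPart π := by
  refine ⟨h.1, fun hmem => ?_⟩
  have := (h.2 ∅ hmem).nonempty
  rcases this with ⟨⟨x, hx⟩⟩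
  simp at hx

lemma PPart.eq_of_mem (h : PPart π) (hB : B ∈ π) (hC : C ∈ π) (hvB : v ∈ B)
    (hvC : v ∈ C) : B = C := by
  obtain ⟨D, -, hD⟩ := h.1 v
  rw [hD B ⟨hB, hvB⟩, hD C ⟨hC, hvC⟩]

lemma PPart.blk_mem (h : PPart π) (v : V) : blk π v ∈ π ∧ v ∈ blk π v := by
  obtain ⟨B, hB, -⟩ := h.1 v
  rw [blk, dif_pos ⟨B, hB⟩]
  exact (⟨B, hB⟩ : ∃ B, B ∈ π ∧ v ∈ B).choose_spec

lemma PPart.blk_eq (h : PPart π) (hB : B ∈ π) (hv : v ∈ B) : blk π v = B :=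
  h.eq_of_mem (h.blk_mem v).1 hB (h.blk_mem v).2 hv

lemma PPart.nonempty_of_mem (h : PPart π) (hB : B ∈ π) : B.Nonempty := by
  rcases B.eq_empty_or_nonempty with rfl | hne
  · exact absurd hB h.2
  · exact hne

lemma PPart.disjoint (h : PPart π) (hB : B ∈ π) (hC : C ∈ π) (hne : B ≠ C) :
    Disjoint B C := by
  rw [Finset.disjoint_left]
  intro a haB haC
  exact hne (h.eq_of_mem hB hC haB haC)

/-- a representative of a nonempty finset -/
noncomputable def rep [Nonempty V] (B : Finset V) : V :=
  if h : B.Nonempty then h.choose else Classical.arbitrary V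

lemma rep_mem [Nonempty V] (h : B.Nonempty) : rep B ∈ B := by
  rw [rep, dif_pos h]; exact h.choose_spec

lemma Refines.blk_subset (h : PPart π) (hσ : PPart σ) (hr : Refines π σ) (v : V) :
    blk π v ⊆ blk σ v := by
  obtain ⟨C, hC, hsub⟩ := hr _ (h.blk_mem v).1
  have hb : blk σ v = C := hσ.blk_eq hC (hsub (h.blk_mem v).2)
  rw [hb]
  exact hsub

lemma PPart.card_le_card_of_refines [Nonempty V] (h : PPart π) (hσ : PPart σ)
    (hr : Refines π σ) : σ.card ≤ π.card := by
  have hmaps : ∀ B ∈ π, blk σ (rep B) ∈ σ := fun B hB => (hσ.blk_mem _).1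
  have hsurj : ∀ C ∈ σ, ∃ B ∈ π, blk σ (rep B) = C := by
    intro C hC
    have hCne : C.Nonempty := hσ.nonempty_of_mem hC
    refine ⟨blk π (rep C), (h.blk_mem _).1, ?_⟩
    obtain ⟨D, hD, hsub⟩ := hr _ (h.blk_mem (rep C)).1
    have h1 : rep (blk π (rep C)) ∈ D := hsub (rep_mem (h.nonempty_of_mem (h.blk_mem _).1))
    have h2 : rep C ∈ D := hsub (h.blk_mem (rep C)).2
    rw [hσ.blk_eq hD h1]
    exact hσ.eq_of_mem hD hC h2 (rep_mem hCne)
  exact Finset.card_le_card_of_surjOn (fun B => blk σ (rep B))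
    (by intro C hC; simp only [Finset.coe_filter, Set.mem_image, Finset.mem_coe] at *
        obtain ⟨B, hB, hBC⟩ := hsurj C hC; exact ⟨B, hB, hBC⟩)

lemma PPart.eq_of_refines_card [Nonempty V] (h : PPart π) (hσ : PPart σ)
    (hr : Refines π σ) (hcard : π.card = σ.card) : π = σ := by
  -- f B := blk σ (rep B) is a surjection π → σ, hence bijective by cards
  set f : Finset V → Finset V := fun B => blk σ (rep B) with hf
  have hfB : ∀ B ∈ π, B ⊆ f B := by
    intro B hB
    obtain ⟨C, hC, hsub⟩ := hr _ hB
    have : f B = C := hσ.blk_eq hC (hsub (rep_mem (h.nonempty_of_mem hB)))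
    rw [this]; exact hsub
  have hmaps : ∀ B ∈ π, f B ∈ σ := fun B hB => (hσ.blk_mem _).1
  have hsurj : Set.SurjOn f π σ := by
    intro C hC
    simp only [Finset.mem_coe] at hC
    have hCne : C.Nonempty := hσ.nonempty_of_mem hC
    refine ⟨blk π (rep C), (h.blk_mem _).1, ?_⟩
    have hsub := hfB _ (h.blk_mem (rep C)).1
    have h2 : rep C ∈ f (blk π (rep C)) := hsub (h.blk_mem (rep C)).2
    exact hσ.eq_of_mem (hmaps _ (h.blk_mem _).1) hC h2 (rep_mem hCne)
  have himg : π.image f = σ := by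
    apply Finset.Subset.antisymm
    · intro C hC
      obtain ⟨B, hB, rfl⟩ := Finset.mem_image.1 hC
      exact hmaps B hB
    · intro C hC
      obtain ⟨B, hB, hBC⟩ := hsurj (Finset.mem_coe.2 hC)
      exact Finset.mem_image.2 ⟨B, Finset.mem_coe.1 hB, hBC⟩
  have hinj : Set.InjOn f π := by
    apply Finset.injOn_of_card_image_eq
    rw [himg, hcard]
  -- now show π ⊆ σ and conclude by cards
  have hsubset : π ⊆ σ := by
    intro B hB
    have hBC : B ⊆ f B := hfB B hB
    have : f B ⊆ B := by
      intro w hw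
      have hw1 : w ∈ blk π w := (h.blk_mem w).2
      have hw2 : f (blk π w) = f B := by
        apply hσ.eq_of_mem (hmaps _ (h.blk_mem w).1) (hmaps _ hB)
        · exact hfB _ (h.blk_mem w).1 hw1
        · exact hw
      have : blk π w = B := hinj (Finset.mem_coe.2 (h.blk_mem w).1) (Finset.mem_coe.2 hB) hw2
      rwa [← this]
    have : B = f B := Finset.Subset.antisymm hBC this
    rw [this]; exact hmaps B hB
  exact Finset.eq_of_subset_of_card_le hsubset (le_of_eq hcard.symm)

lemma PPart.card_le_fintype [Nonempty V] (h : PPart π) : π.card ≤ Fintype.card V := by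
  rw [← Finset.card_univ]
  apply Finset.card_le_card_of_injOn rep (fun B _ => Finset.mem_univ _)
  intro B hB C hC hrep
  simp only [Finset.mem_coe] at hB hC
  exact h.eq_of_mem hB hC (rep_mem (h.nonempty_of_mem hB))
    (hrep ▸ rep_mem (h.nonempty_of_mem hC))

end Aux
section JoinOp

variable {G : SimpleGraph V} {π σ : Finset (Finset V)} {B C S : Finset V} {u v : V}

/-- the partition obtained by merging the blocks of `u` and `v` -/
noncomputable def J (π : Finset (Finset V)) (u v : V) : Finset (Finset V) :=
  insert (blk π u ∪ blk π v) ((π.erase (blk π u)).erase (blk π v))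

lemma J_eq_self (h : PPart π) (hb : blk π u = blk π v) : J π u v = π := by
  rw [J, hb, Finset.union_self, Finset.erase_idem, Finset.insert_erase (h.blk_mem v).1]

lemma mem_bondFinset : π ∈ bondFinset G ↔ IsBondPartition G π := by
  rw [bondFinset, Finset.mem_filter]
  simp

section ne
variable (h : PPart π) (hne : blk π u ≠ blk π v)
include h hne

lemma union_not_mem_ained : blk π u ∪ blk π v ∉ π := by
  intro hmem
  have h1 : blk π u ∪ blk π v = blk π u :=
    h.eq_of_mem hmem (h.blk_mem u).1 (Finset.mem_union_left _ (h.blk_mem u).2) (h.blk_mem u).2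
  have h2 : blk π u ∪ blk π v = blk π v :=
    h.eq_of_mem hmem (h.blk_mem v).1 (Finset.mem_union_right _ (h.blk_mem v).2) (h.blk_mem v).2
  exact hne (h1 ▸ h2)

lemma mem_J_iff : B ∈ J π u v ↔ B = blk π u ∪ blk π v ∨
    (B ∈ π ∧ B ≠ blk π u ∧ B ≠ blk π v) := by
  rw [J, Finset.mem_insert, Finset.mem_erase, Finset.mem_erase]
  tauto

lemma J_ppart : PPart (J π u v) := by
  constructor
  · intro w
    by_cases hw : w ∈ blk π u ∪ blk π v
    · refine ⟨blk π u ∪ blk π v, ⟨(mem_J_iff h hne).2 (Or.inl rfl), hw⟩, ?_⟩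
      rintro C ⟨hC, hwC⟩
      rcases (mem_J_iff h hne).1 hC with rfl | ⟨hCπ, hCu, hCv⟩
      · rfl
      · rcases Finset.mem_union.1 hw with hwu | hwv
        · exact absurd (h.eq_of_mem hCπ (h.blk_mem u).1 hwC hwu) hCu
        · exact absurd (h.eq_of_mem hCπ (h.blk_mem v).1 hwC hwv) hCv
    · refine ⟨blk π w, ⟨(mem_J_iff h hne).2 (Or.inr ⟨(h.blk_mem w).1, ?_, ?_⟩),
        (h.blk_mem w).2⟩, ?_⟩
      · intro he; exact hw (Finset.mem_union_left _ (he ▸ (h.blk_mem w).2))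
      · intro he; exact hw (Finset.mem_union_right _ (he ▸ (h.blk_mem w).2))
      · rintro C ⟨hC, hwC⟩
        rcases (mem_J_iff h hne).1 hC with rfl | ⟨hCπ, hCu, hCv⟩
        · exact absurd hwC hw
        · exact (h.eq_of_mem hCπ (h.blk_mem w).1 hwC (h.blk_mem w).2).symm ▸
            (h.blk_eq hCπ hwC).symm
  · intro hmem
    rcases (mem_J_iff h hne).1 hmem with hu | ⟨hπ, -, -⟩
    · have : u ∈ (∅ : Finset V) := hu ▸ Finset.mem_union_left _ (h.blk_mem u).2
      simp at this
    · exact h.2 hπ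

lemma J_card : π.card = (J π u v).card + 1 := by
  have h1 : blk π u ∪ blk π v ∉ (π.erase (blk π u)).erase (blk π v) := by
    intro hmem
    exact union_not_mem_ained h hne (Finset.mem_of_mem_erase (Finset.mem_of_mem_erase hmem))
  have h2 : blk π v ∈ π.erase (blk π u) :=
    Finset.mem_erase.2 ⟨fun hc => hne hc.symm, (h.blk_mem v).1⟩
  rw [J, Finset.card_insert_of_notMem h1, Finset.card_erase_of_mem h2,
    Finset.card_erase_of_mem (h.blk_mem u).1]
  have h3 : 0 < π.card := Finset.card_pos.2 ⟨_, (h.blk_mem u).1⟩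
  have h4 : 1 < π.card := by
    rcases Finset.one_lt_card.2 ⟨_, (h.blk_mem u).1, _, (h.blk_mem v).1, hne⟩ with h'
    exact h'
  omega

end ne

lemma refines_J (h : PPart π) : Refines π (J π u v) := by
  by_cases hb : blk π u = blk π v
  · rw [J_eq_self h hb]; exact fun B hB => ⟨B, hB, Finset.Subset.refl B⟩
  · intro B hB
    by_cases hBu : B = blk π u
    · exact ⟨blk π u ∪ blk π v, (mem_J_iff h hb).2 (Or.inl rfl),
        hBu ▸ Finset.subset_union_left⟩
    by_cases hBv : B = blk π v
    · exact ⟨blk π u ∪ blk π v, (mem_J_iff h hb).2 (Or.inl rfl),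
        hBv ▸ Finset.subset_union_right⟩
    · exact ⟨B, (mem_J_iff h hb).2 (Or.inr ⟨hB, hBu, hBv⟩), Finset.Subset.refl B⟩

lemma J_blk_eq (h : PPart π) : blk (J π u v) u = blk (J π u v) v := by
  by_cases hb : blk π u = blk π v
  · rw [J_eq_self h hb, hb]
  · have hJ := J_ppart h hb
    have hmem : blk π u ∪ blk π v ∈ J π u v := (mem_J_iff h hb).2 (Or.inl rfl)
    rw [hJ.blk_eq hmem (Finset.mem_union_left _ (h.blk_mem u).2),
      hJ.blk_eq hmem (Finset.mem_union_right _ (h.blk_mem v).2)]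

lemma J_refines_of (h : PPart π) (hσ : PPart σ) (hr : Refines π σ)
    (hb : blk σ u = blk σ v) : Refines (J π u v) σ := by
  by_cases hb' : blk π u = blk π v
  · rw [J_eq_self h hb']; exact hr
  · intro B hB
    rcases (mem_J_iff h hb').1 hB with rfl | ⟨hπ, -, -⟩
    · refine ⟨blk σ u, (hσ.blk_mem u).1, ?_⟩
      apply Finset.union_subset
      · exact Refines.blk_subset h hσ hr u
      · rw [hb]; exact Refines.blk_subset h hσ hr v
    · exact hr B hπ

lemma J_bond (h : IsBondPartition G π) (huv : G.Adj u v) :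
    IsBondPartition G (J π u v) := by
  by_cases hb : blk π u = blk π v
  · rwa [J_eq_self h.ppart hb]
  · refine ⟨(J_ppart h.ppart hb).1, ?_⟩
    intro B hB
    rcases (mem_J_iff h.ppart hb).1 hB with rfl | ⟨hπ, -, -⟩
    · rw [Finset.coe_union]
      exact SimpleGraph.connected_induce_union
        (h.2 _ (h.ppart.blk_mem u).1).preconnected (h.2 _ (h.ppart.blk_mem v).1).preconnected
        (h.ppart.blk_mem u).2 (h.ppart.blk_mem v).2 huv
    · exact h.2 B hπ

end JoinOp
section Weisner

variable {G : SimpleGraph V} {π σ y : Finset (Finset V)} {u v : V}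

lemma refines_trans {a b c : Finset (Finset V)} (h1 : Refines a b) (h2 : Refines b c) :
    Refines a c := by
  intro B hB
  obtain ⟨C, hC, hBC⟩ := h1 B hB
  obtain ⟨D, hD, hCD⟩ := h2 C hC
  exact ⟨D, hD, hBC.trans hCD⟩

lemma bot_ppart : PPart (botPartition V) := by
  constructor
  · intro w
    refine ⟨{w}, ⟨Finset.mem_image.2 ⟨w, Finset.mem_univ w, rfl⟩, Finset.mem_singleton_self w⟩, ?_⟩
    rintro C ⟨hC, hwC⟩
    obtain ⟨a, -, rfl⟩ := Finset.mem_image.1 hC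
    rw [Finset.mem_singleton] at hwC
    rw [hwC]
  · intro hmem
    obtain ⟨a, -, ha⟩ := Finset.mem_image.1 hmem
    exact Finset.singleton_ne_empty a ha

lemma ne_bot_of_blk (h : PPart y) (hb : blk y u = blk y v) (hne : u ≠ v) :
    y ≠ botPartition V := by
  rintro rfl
  have h1 : blk (botPartition V) u = {u} :=
    bot_ppart.blk_eq (Finset.mem_image.2 ⟨u, Finset.mem_univ u, rfl⟩) (Finset.mem_singleton_self u)
  have h2 : v ∈ blk (botPartition V) u := hb ▸ (bot_ppart.blk_mem v).2
  rw [h1, Finset.mem_singleton] at h2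
  exact hne h2.symm

lemma weisner (G : SimpleGraph V) (mu : Finset (Finset V) → ℤ)
    (hmu : ∀ π ∈ bondFinset G, π ≠ botPartition V →
      ∑ σ ∈ (bondFinset G).filter (fun σ => Refines σ π), mu σ = 0)
    {u v : V} (huv : G.Adj u v) :
    ∀ y ∈ bondFinset G, blk y u = blk y v →
      ∑ x ∈ (bondFinset G).filter (fun x => J x u v = y), mu x = 0 := by
  haveI : Nonempty V := ⟨u⟩
  suffices H : ∀ k : ℕ, ∀ y, y ∈ bondFinset G → blk y u = blk y v →
      Fintype.card V - y.card = k →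
      ∑ x ∈ (bondFinset G).filter (fun x => J x u v = y), mu x = 0 by
    intro y hy hb; exact H _ y hy hb rfl
  intro k
  induction k using Nat.strong_induction_on with
  | _ k ih =>
  intro y hy hb hk
  have hyP := (mem_bondFinset.1 hy).ppart
  have hybot : y ≠ botPartition V := ne_bot_of_blk hyP hb huv.ne
  set s := (bondFinset G).filter (fun x => Refines x y) with hs
  set t := s.filter (fun z => blk z u = blk z v) with ht
  have h0 : ∑ x ∈ s, mu x = 0 := hmu y hy hybot
  have hmaps : ∀ x ∈ s, J x u v ∈ t := by
    intro x hx
    rw [hs, Finset.mem_filter] at hx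
    obtain ⟨hxb, hxr⟩ := hx
    have hxP := (mem_bondFinset.1 hxb).ppart
    rw [ht, Finset.mem_filter]
    exact ⟨Finset.mem_filter.2 ⟨mem_bondFinset.2 (J_bond (mem_bondFinset.1 hxb) huv),
      J_refines_of hxP hyP hxr hb⟩, J_blk_eq hxP⟩
  have hdecomp := Finset.sum_fiberwise_of_maps_to hmaps mu
  have hfib : ∀ z ∈ t, s.filter (fun x => J x u v = z) =
      (bondFinset G).filter (fun x => J x u v = z) := by
    intro z hz
    rw [ht, Finset.mem_filter, hs, Finset.mem_filter] at hz
    obtain ⟨⟨hzb, hzr⟩, -⟩ := hz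
    ext x
    simp only [hs, Finset.mem_filter]
    constructor
    · rintro ⟨⟨hx, -⟩, hJ⟩; exact ⟨hx, hJ⟩
    · rintro ⟨hx, hJ⟩
      refine ⟨⟨hx, ?_⟩, hJ⟩
      have hxP := (mem_bondFinset.1 hx).ppart
      exact refines_trans (hJ ▸ refines_J hxP) hzr
  have hyt : y ∈ t := by
    rw [ht, Finset.mem_filter, hs, Finset.mem_filter]
    exact ⟨⟨hy, fun B hB => ⟨B, hB, Finset.Subset.refl B⟩⟩, hb⟩
  have hzero : ∀ z ∈ t, z ≠ y →
      ∑ x ∈ s.filter (fun x => J x u v = z), mu x = 0 := by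
    intro z hz hzy
    have hz' := hz
    rw [ht, Finset.mem_filter, hs, Finset.mem_filter] at hz'
    obtain ⟨⟨hzb, hzr⟩, hzblk⟩ := hz'
    have hzP := (mem_bondFinset.1 hzb).ppart
    have hycard : y.card ≤ z.card := hzP.card_le_card_of_refines hyP hzr
    have hne' : y.card ≠ z.card := by
      intro hc
      exact hzy (hzP.eq_of_refines_card hyP hzr hc.symm)
    have hzle : z.card ≤ Fintype.card V := hzP.card_le_fintype
    rw [hfib z hz]
    exact ih (Fintype.card V - z.card) (by omega) z hzb hzblk rfl
  have : ∑ z ∈ t, ∑ x ∈ s.filter (fun x => J x u v = z), mu x =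
      ∑ x ∈ s.filter (fun x => J x u v = y), mu x :=
    Finset.sum_eq_single_of_mem y hyt hzero
  rw [← hfib y hyt, ← this, hdecomp, h0]

end Weisner
section CoverStructure

variable {G : SimpleGraph V} {π π' : Finset (Finset V)} {u v : V}

lemma cover_structure (hc : BondCovers G π π') :
    ∃ S B₁ B₂ : Finset V, S ∈ π ∧ B₁ ∈ π' ∧ B₂ ∈ π' ∧ B₁ ≠ B₂ ∧ Disjoint B₁ B₂ ∧
      B₁ ∪ B₂ = S ∧ π \ π' = {S} ∧ π' \ π = {B₁, B₂} ∧
      π = insert S ((π'.erase B₁).erase B₂) := by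
  obtain ⟨hπ, hπ', hr, hcard⟩ := hc
  have hP := hπ.ppart
  have hP' := hπ'.ppart
  -- V is nonempty since π' is nonempty with nonempty blocks
  have hπ'ne : π'.Nonempty := Finset.card_pos.1 (by omega)
  obtain ⟨B0, hB0⟩ := hπ'ne
  obtain ⟨v0, -⟩ := hP'.nonempty_of_mem hB0
  haveI : Nonempty V := ⟨v0⟩
  set f : Finset V → Finset V := fun B => blk π (rep B) with hf
  have hfB : ∀ B ∈ π', B ⊆ f B ∧ f B ∈ π := by
    intro B hB
    obtain ⟨C, hC, hsub⟩ := hr B hB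
    have : f B = C := hP.blk_eq hC (hsub (rep_mem (hP'.nonempty_of_mem hB)))
    rw [this]; exact ⟨hsub, hC⟩
  set n : Finset V → ℕ := fun C => (π'.filter (fun B => f B = C)).card with hn
  have hwblk : ∀ (w : V) (C : Finset V), C ∈ π → w ∈ C →
      blk π' w ∈ π'.filter (fun B => f B = C) := by
    intro w C hC hw
    refine Finset.mem_filter.2 ⟨(hP'.blk_mem w).1, ?_⟩
    obtain ⟨hsub, hfmem⟩ := hfB _ (hP'.blk_mem w).1
    exact hP.eq_of_mem hfmem hC (hsub (hP'.blk_mem w).2) hw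
  have hcount : π'.card = ∑ C ∈ π, n C :=
    Finset.card_eq_sum_card_fiberwise (fun B hB => (hfB B hB).2)
  have h1le : ∀ C ∈ π, 1 ≤ n C := by
    intro C hC
    obtain ⟨w, hw⟩ := hP.nonempty_of_mem hC
    exact Finset.card_pos.2 ⟨blk π' w, hwblk w C hC hw⟩
  have hsum1 : ∑ C ∈ π, (n C - 1) = 1 := by
    have : ∑ C ∈ π, n C = ∑ C ∈ π, (1 + (n C - 1)) :=
      Finset.sum_congr rfl (fun C hC => by have := h1le C hC; omega)
    rw [Finset.sum_add_distrib, Finset.sum_const, smul_eq_mul, mul_one] at this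
    omega
  obtain ⟨C₀, hC₀π, hC₀ne⟩ : ∃ C₀ ∈ π, n C₀ - 1 ≠ 0 := by
    by_contra hcon
    push_neg at hcon
    rw [Finset.sum_eq_zero hcon] at hsum1
    omega
  have hsplit : (n C₀ - 1) + ∑ C ∈ π.erase C₀, (n C - 1) = 1 :=
    (Finset.add_sum_erase _ (fun C => n C - 1) hC₀π).trans hsum1
  have hnC₀ : n C₀ = 2 := by have := h1le C₀ hC₀π; omega
  have hrest : ∀ C ∈ π, C ≠ C₀ → n C = 1 := by
    intro C hC hne
    have h0 : ∑ C ∈ π.erase C₀, (n C - 1) = 0 := by omega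
    have := (Finset.sum_eq_zero_iff).1 h0 C (Finset.mem_erase.2 ⟨hne, hC⟩)
    have := h1le C hC
    omega
  -- blocks of π other than C₀ are blocks of π'
  have hCeq : ∀ C ∈ π, C ≠ C₀ → C ∈ π' := by
    intro C hC hne
    obtain ⟨B, hB⟩ := Finset.card_eq_one.1 (hrest C hC hne)
    have hBmem : B ∈ π'.filter (fun B => f B = C) := hB ▸ Finset.mem_singleton_self B
    have hBπ' : B ∈ π' := (Finset.mem_filter.1 hBmem).1
    have hBf : f B = C := (Finset.mem_filter.1 hBmem).2
    have hBC : B ⊆ C := hBf ▸ (hfB B hBπ').1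
    have hCB : C ⊆ B := by
      intro w hw
      have := hwblk w C hC hw
      rw [hB, Finset.mem_singleton] at this
      exact this ▸ (hP'.blk_mem w).2
    exact Finset.Subset.antisymm hBC hCB ▸ hBπ'
  obtain ⟨B₁, B₂, hB12, hfib2⟩ := Finset.card_eq_two.1 hnC₀
  have hB₁ : B₁ ∈ π' ∧ f B₁ = C₀ := by
    have : B₁ ∈ π'.filter (fun B => f B = C₀) := hfib2 ▸ Finset.mem_insert_self _ _
    exact ⟨(Finset.mem_filter.1 this).1, (Finset.mem_filter.1 this).2⟩
  have hB₂ : B₂ ∈ π' ∧ f B₂ = C₀ := by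
    have : B₂ ∈ π'.filter (fun B => f B = C₀) := hfib2 ▸
      Finset.mem_insert.2 (Or.inr (Finset.mem_singleton_self B₂))
    exact ⟨(Finset.mem_filter.1 this).1, (Finset.mem_filter.1 this).2⟩
  have hdisj : Disjoint B₁ B₂ := hP'.disjoint hB₁.1 hB₂.1 hB12
  have hunion : B₁ ∪ B₂ = C₀ := by
    apply Finset.Subset.antisymm
    · exact Finset.union_subset (hB₁.2 ▸ (hfB B₁ hB₁.1).1) (hB₂.2 ▸ (hfB B₂ hB₂.1).1)
    · intro w hw
      have := hwblk w C₀ hC₀π hw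
      rw [hfib2, Finset.mem_insert, Finset.mem_singleton] at this
      rcases this with h | h
      · exact Finset.mem_union_left _ (h ▸ (hP'.blk_mem w).2)
      · exact Finset.mem_union_right _ (h ▸ (hP'.blk_mem w).2)
  have hSnot : C₀ ∉ π' := by
    intro hmem
    have he1 : B₁ = C₀ := hP'.eq_of_mem hB₁.1 hmem
      (rep_mem (hP'.nonempty_of_mem hB₁.1)) ((hB₁.2 ▸ (hfB B₁ hB₁.1).1) (rep_mem (hP'.nonempty_of_mem hB₁.1)))
    have he2 : B₂ = C₀ := hP'.eq_of_mem hB₂.1 hmem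
      (rep_mem (hP'.nonempty_of_mem hB₂.1)) ((hB₂.2 ▸ (hfB B₂ hB₂.1).1) (rep_mem (hP'.nonempty_of_mem hB₂.1)))
    exact hB12 (he1.trans he2.symm)
  have hB₁not : B₁ ∉ π := by
    intro hmem
    have : B₁ = C₀ := hP.eq_of_mem hmem hC₀π
      (rep_mem (hP'.nonempty_of_mem hB₁.1)) ((hB₁.2 ▸ (hfB B₁ hB₁.1).1) (rep_mem (hP'.nonempty_of_mem hB₁.1)))
    obtain ⟨w, hw⟩ := hP'.nonempty_of_mem hB₂.1
    have hwB₁ : w ∈ B₁ := this ▸ (hunion ▸ Finset.mem_union_right _ hw)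
    exact Finset.disjoint_left.1 hdisj hwB₁ hw
  have hB₂not : B₂ ∉ π := by
    intro hmem
    have : B₂ = C₀ := hP.eq_of_mem hmem hC₀π
      (rep_mem (hP'.nonempty_of_mem hB₂.1)) ((hB₂.2 ▸ (hfB B₂ hB₂.1).1) (rep_mem (hP'.nonempty_of_mem hB₂.1)))
    obtain ⟨w, hw⟩ := hP'.nonempty_of_mem hB₁.1
    have hwB₂ : w ∈ B₂ := this ▸ (hunion ▸ Finset.mem_union_left _ hw)
    exact Finset.disjoint_left.1 hdisj hw hwB₂
  have hsdiff : π \ π' = {C₀} := by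
    ext C
    rw [Finset.mem_sdiff, Finset.mem_singleton]
    constructor
    · rintro ⟨hC, hC'⟩
      by_contra hne
      exact hC' (hCeq C hC hne)
    · rintro rfl
      exact ⟨hC₀π, hSnot⟩
  have hsdiff' : π' \ π = {B₁, B₂} := by
    ext B
    rw [Finset.mem_sdiff, Finset.mem_insert, Finset.mem_singleton]
    constructor
    · rintro ⟨hB, hBπ⟩
      by_cases hne : f B = C₀
      · have : B ∈ π'.filter (fun B => f B = C₀) := Finset.mem_filter.2 ⟨hB, hne⟩
        rw [hfib2, Finset.mem_insert, Finset.mem_singleton] at this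
        exact this
      · have hfmem := (hfB B hB).2
        have : B ∈ π'.filter (fun B' => f B' = f B) := Finset.mem_filter.2 ⟨hB, rfl⟩
        obtain ⟨B', hB'⟩ := Finset.card_eq_one.1 (hrest (f B) hfmem hne)
        rw [hB', Finset.mem_singleton] at this
        have hBfB : B = f B := by
          have hBmem : B' ∈ π'.filter (fun B' => f B' = f B) := hB' ▸ Finset.mem_singleton_self B'
          have hsub : B ⊆ f B := (hfB B hB).1
          have : f B ⊆ B := by
            intro w hw
            have hwb := hwblk w (f B) hfmem hw
            rw [hB', Finset.mem_singleton] at hwb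
            rw [← this] at hwb
            exact hwb ▸ (hP'.blk_mem w).2
          exact Finset.Subset.antisymm hsub this
        exact absurd (hBfB ▸ hfmem) hBπ
    · rintro (rfl | rfl)
      · exact ⟨hB₁.1, hB₁not⟩
      · exact ⟨hB₂.1, hB₂not⟩
  refine ⟨C₀, B₁, B₂, hC₀π, hB₁.1, hB₂.1, hB12, hdisj, hunion, hsdiff, hsdiff', ?_⟩
  ext C
  rw [Finset.mem_insert, Finset.mem_erase, Finset.mem_erase]
  constructor
  · intro hC
    by_cases hne : C = C₀
    · exact Or.inl hne
    · have hC' := hCeq C hC hne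
      refine Or.inr ⟨?_, ?_, hC'⟩
      · rintro rfl; exact hB₂not hC
      · rintro rfl; exact hB₁not hC
  · rintro (rfl | ⟨hne2, hne1, hC'⟩)
    · exact hC₀π
    · by_contra hCπ
      have : C ∈ π' \ π := Finset.mem_sdiff.2 ⟨hC', hCπ⟩
      rw [hsdiff', Finset.mem_insert, Finset.mem_singleton] at this
      tauto

end CoverStructure
section Edges

variable {G : SimpleGraph V} {π π' : Finset (Finset V)} {S B₁ B₂ : Finset V} {u v : V}

/-- edges inside `S` -/
noncomputable def ES (G : SimpleGraph V) (S : Finset V) : Finset (Sym2 V) :=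
  Finset.univ.filter fun e : Sym2 V => e ∈ G.edgeSet ∧ ∀ v ∈ e, v ∈ S

lemma eIn_eq_card_ES : eIn G S = (ES G S).card := rfl

/-- `e` is separated by the partition `π'` -/
def SepE (π' : Finset (Finset V)) (e : Sym2 V) : Prop :=
  ¬ ∀ a ∈ e, ∀ b ∈ e, blk π' a = blk π' b

lemma sepE_mk : SepE π' s(u, v) ↔ blk π' u ≠ blk π' v := by
  rw [SepE]
  constructor
  · intro h hb
    apply h
    intro a ha b hbmem
    rw [Sym2.mem_iff] at ha hbmem
    rcases ha with rfl | rfl <;> rcases hbmem with rfl | rfl <;> simp [hb]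
  · intro hne h
    exact hne (h u (Sym2.mem_mk_left u v) v (Sym2.mem_mk_right u v))

lemma eBetween_comm : eBetween G B₁ B₂ = eBetween G B₂ B₁ := by
  rw [eBetween, eBetween]
  congr 1
  ext e
  simp only [Finset.mem_filter, Finset.mem_univ, true_and]
  constructor
  · rintro ⟨he, a, ha, b, hb, rfl⟩
    exact ⟨he, b, hb, a, ha, Sym2.eq_swap⟩
  · rintro ⟨he, a, ha, b, hb, rfl⟩
    exact ⟨he, b, hb, a, ha, Sym2.eq_swap⟩

lemma sep_filter_empty (hP' : PPart π') (hS : S ∈ π') :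
    (ES G S).filter (fun e => SepE π' e) = ∅ := by
  rw [Finset.filter_eq_empty_iff]
  intro e he
  rw [ES, Finset.mem_filter] at he
  rw [SepE, not_not]
  intro a ha b hb
  rw [hP'.blk_eq hS (he.2.2 a ha), hP'.blk_eq hS (he.2.2 b hb)]

lemma sep_filter_card (hP' : PPart π') (hB₁ : B₁ ∈ π') (hB₂ : B₂ ∈ π')
    (hne : B₁ ≠ B₂) (hun : B₁ ∪ B₂ = S) :
    ((ES G S).filter (fun e => SepE π' e)).card = eBetween G B₁ B₂ := by
  rw [eBetween]
  congr 1
  ext e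
  induction e with
  | _ x y =>
    rw [Finset.mem_filter, ES, Finset.mem_filter, Finset.mem_filter]
    simp only [Finset.mem_univ, true_and]
    constructor
    · rintro ⟨⟨he, hin⟩, hsep⟩
      rw [sepE_mk] at hsep
      have hx : x ∈ S := hin x (Sym2.mem_mk_left x y)
      have hy : y ∈ S := hin y (Sym2.mem_mk_right x y)
      rw [← hun, Finset.mem_union] at hx hy
      rcases hx with hx | hx <;> rcases hy with hy | hy
      · exact absurd (by rw [hP'.blk_eq hB₁ hx, hP'.blk_eq hB₁ hy]) hsep
      · exact ⟨he, x, hx, y, hy, rfl⟩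
      · exact ⟨he, y, hy, x, hx, Sym2.eq_swap⟩
      · exact absurd (by rw [hP'.blk_eq hB₂ hx, hP'.blk_eq hB₂ hy]) hsep
    · rintro ⟨he, a, ha, b, hb, heq⟩
      have hmem : ∀ w ∈ s(x, y), w ∈ S := by
        intro w hw
        rw [heq, Sym2.mem_iff] at hw
        rcases hw with rfl | rfl
        · exact hun ▸ Finset.mem_union_left _ ha
        · exact hun ▸ Finset.mem_union_right _ hb
      refine ⟨⟨he, hmem⟩, ?_⟩
      rw [heq, sepE_mk, hP'.blk_eq hB₁ ha, hP'.blk_eq hB₂ hb]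
      exact hne

lemma eIn_pos (hconn : (G.induce (S : Set V)).Connected) (h2 : 1 < S.card) :
    0 < eIn G S := by
  obtain ⟨x, hx, y, hy, hxy⟩ := Finset.one_lt_card.1 h2
  have hreach : (G.induce (S : Set V)).Reachable ⟨x, Finset.mem_coe.2 hx⟩
      ⟨y, Finset.mem_coe.2 hy⟩ := hconn.preconnected _ _
  obtain ⟨w⟩ := hreach
  have : ∃ a b : (S : Set V), (G.induce (S : Set V)).Adj a b := by
    cases w with
    | nil => exact absurd rfl hxy
    | cons h p => exact ⟨_, _, h⟩
  obtain ⟨a, b, hab⟩ := this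
  have hGab : G.Adj a b := hab
  rw [eIn_eq_card_ES]
  apply Finset.card_pos.2
  refine ⟨s(a.1, b.1), Finset.mem_filter.2 ⟨Finset.mem_univ _, hGab, ?_⟩⟩
  intro w hw
  rw [Sym2.mem_iff] at hw
  rcases hw with rfl | rfl
  · exact Finset.mem_coe.1 a.2
  · exact Finset.mem_coe.1 b.2

end Edges
section Fiber

variable {G : SimpleGraph V} {π x : Finset (Finset V)} {u v : V} {S : Finset V}

lemma self_not_cover : π ∉ (bondFinset G).filter
    (fun π' => BondCovers G π π' ∧ blk π' u ≠ blk π' v) := by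
  rw [Finset.mem_filter]
  rintro ⟨-, ⟨-, -, -, hcard⟩, -⟩
  omega

lemma fiber_char (hπ : π ∈ bondFinset G) (huv : G.Adj u v) (hb : blk π u = blk π v) :
    (bondFinset G).filter (fun x => J x u v = π) =
      insert π ((bondFinset G).filter
        (fun π' => BondCovers G π π' ∧ blk π' u ≠ blk π' v)) := by
  ext x
  rw [Finset.mem_filter, Finset.mem_insert, Finset.mem_filter]
  constructor
  · rintro ⟨hxb, hJ⟩
    by_cases hbx : blk x u = blk x v
    · left; rw [← hJ, J_eq_self (mem_bondFinset.1 hxb).ppart hbx]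
    · right
      refine ⟨hxb, ⟨mem_bondFinset.1 hπ, mem_bondFinset.1 hxb, ?_, ?_⟩, hbx⟩
      · exact hJ ▸ refines_J (mem_bondFinset.1 hxb).ppart
      · have := J_card (u := u) (v := v) (mem_bondFinset.1 hxb).ppart hbx
        rw [hJ] at this; omega
  · rintro (rfl | ⟨hxb, hcov, hsep⟩)
    · exact ⟨hπ, J_eq_self (mem_bondFinset.1 hπ).ppart hb⟩
    · refine ⟨hxb, ?_⟩
      obtain ⟨S', Bone, Btwo, hS'π, hB₁x, hB₂x, hB12, hdisj, hun, hsd, hsd', hins⟩ :=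
        cover_structure hcov
      have hPx := (mem_bondFinset.1 hxb).ppart
      have hPπ := (mem_bondFinset.1 hπ).ppart
      have hSmem : blk π u ∈ π := (hPπ.blk_mem u).1
      have hSnotx : blk π u ∉ x := by
        intro hmem
        apply hsep
        rw [hPx.blk_eq hmem (hPπ.blk_mem u).2, hPx.blk_eq hmem (hb ▸ (hPπ.blk_mem v).2)]
      have hbxmem : ∀ w : V, w ∈ blk π u → blk x w ∈ ({Bone, Btwo} : Finset (Finset V)) := by
        intro w hw
        rw [← hsd']
        apply Finset.mem_sdiff.2
        refine ⟨(hPx.blk_mem w).1, fun hmem => ?_⟩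
        have heq : blk x w = blk π u := hPπ.eq_of_mem hmem hSmem (hPx.blk_mem w).2 hw
        exact hSnotx (heq ▸ (hPx.blk_mem w).1)
      have hbxu := hbxmem u (hPπ.blk_mem u).2
      have hbxv := hbxmem v (hb ▸ (hPπ.blk_mem v).2)
      rw [Finset.mem_insert, Finset.mem_singleton] at hbxu hbxv
      rcases hbxu with h1 | h1 <;> rcases hbxv with h2 | h2
      · exact absurd (h1.trans h2.symm) hsep
      · rw [J, h1, h2, hun]; exact hins.symm
      · have hec : (x.erase Btwo).erase Bone = (x.erase Bone).erase Btwo := by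
          ext C; rw [Finset.mem_erase, Finset.mem_erase, Finset.mem_erase, Finset.mem_erase]; tauto
        rw [J, h1, h2, Finset.union_comm, hun, hec]; exact hins.symm
      · exact absurd (h1.trans h2.symm) hsep

lemma edge_identity (G : SimpleGraph V) (mu : Finset (Finset V) → ℤ)
    (hmu : ∀ π ∈ bondFinset G, π ≠ botPartition V →
      ∑ σ ∈ (bondFinset G).filter (fun σ => Refines σ π), mu σ = 0)
    (hπ : π ∈ bondFinset G) (hS : S ∈ π) (e : Sym2 V) (he : e ∈ ES G S) :
    mu π + ∑ π' ∈ (bondFinset G).filter (fun π' => BondCovers G π π'),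
      (if SepE π' e then mu π' else 0) = 0 := by
  induction e with
  | _ u v =>
  rw [ES, Finset.mem_filter] at he
  obtain ⟨-, hedge, hin⟩ := he
  have huv : G.Adj u v := hedge
  have hu : u ∈ S := hin u (Sym2.mem_mk_left u v)
  have hv : v ∈ S := hin v (Sym2.mem_mk_right u v)
  have hPπ := (mem_bondFinset.1 hπ).ppart
  have hb : blk π u = blk π v := by rw [hPπ.blk_eq hS hu, hPπ.blk_eq hS hv]
  have hW := weisner G mu hmu huv π hπ hb
  rw [fiber_char hπ huv hb, Finset.sum_insert self_not_cover] at hW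
  have hfe : (bondFinset G).filter (fun π' => BondCovers G π π' ∧ blk π' u ≠ blk π' v) =
      ((bondFinset G).filter (fun π' => BondCovers G π π')).filter
        (fun π' => SepE π' s(u, v)) := by
    rw [Finset.filter_filter]
    apply Finset.filter_congr
    intro π' _
    rw [sepE_mk]
  rw [hfe, Finset.sum_filter] at hW
  exact hW

lemma block_identity (G : SimpleGraph V) (mu : Finset (Finset V) → ℤ)
    (hmu : ∀ π ∈ bondFinset G, π ≠ botPartition V →
      ∑ σ ∈ (bondFinset G).filter (fun σ => Refines σ π), mu σ = 0)
    (hπ : π ∈ bondFinset G) (hS : S ∈ π) :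
    (eIn G S : ℤ) * mu π +
      ∑ π' ∈ (bondFinset G).filter (fun π' => BondCovers G π π'),
        (((ES G S).filter (fun e => SepE π' e)).card : ℤ) * mu π' = 0 := by
  have h0 : ∑ e ∈ ES G S, (mu π + ∑ π' ∈ (bondFinset G).filter
      (fun π' => BondCovers G π π'), (if SepE π' e then mu π' else 0)) = 0 :=
    Finset.sum_eq_zero (fun e he => edge_identity G mu hmu hπ hS e he)
  rw [Finset.sum_add_distrib, Finset.sum_const, Finset.sum_comm] at h0
  have hrw : ∀ π' ∈ (bondFinset G).filter (fun π' => BondCovers G π π'),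
      ∑ e ∈ ES G S, (if SepE π' e then mu π' else 0) =
      (((ES G S).filter (fun e => SepE π' e)).card : ℤ) * mu π' := by
    intro π' _
    rw [← Finset.sum_filter, Finset.sum_const, nsmul_eq_mul]
  rw [Finset.sum_congr rfl hrw] at h0
  rw [eIn_eq_card_ES]
  rw [nsmul_eq_mul] at h0
  exact h0

end Fiber
/-- Peterson-type recurrence: `m(π) = (-1)^{l-|π|} μ(0̂,π)` satisfies `m(0̂)=1` and
`m(π) = ∑_{π → π'} w(π,π') m(π')` for `π ≠ 0̂`. -/
theorem mobius_peterson_recurrence (G : SimpleGraph V)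
    (mu : Finset (Finset V) → ℤ)
    (hmu0 : mu (botPartition V) = 1)
    (hmu : ∀ π ∈ bondFinset G, π ≠ botPartition V →
      ∑ σ ∈ (bondFinset G).filter (fun σ => Refines σ π), mu σ = 0) :
    ((-1 : ℚ) ^ (Fintype.card V - (botPartition V).card) * mu (botPartition V) = 1) ∧
    ∀ π ∈ bondFinset G, π ≠ botPartition V →
      ((-1 : ℚ) ^ (Fintype.card V - π.card) * mu π) =
        ∑ π' ∈ (bondFinset G).filter (fun π' => BondCovers G π π'),
          covWeight G π π' * ((-1 : ℚ) ^ (Fintype.card V - π'.card) * mu π') := by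
  constructor
  · have hcard : (botPartition V).card = Fintype.card V := by
      rw [botPartition, Finset.card_image_of_injective _ Finset.singleton_injective,
        Finset.card_univ]
    rw [hcard, Nat.sub_self, pow_zero, one_mul, hmu0, Int.cast_one]
  intro π hπ hbot
  haveI hne : Nonempty V := by
    rcases isEmpty_or_nonempty V with hE | hNE
    · exfalso
      apply hbot
      have h1 : π = ∅ := by
        rw [Finset.eq_empty_iff_forall_notMem]
        intro B hB
        obtain ⟨⟨w, -⟩⟩ := ((mem_bondFinset.1 hπ).2 B hB).nonempty
        exact hE.elim w
      have h2 : botPartition V = ∅ := by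
        rw [botPartition, Finset.univ_eq_empty, Finset.image_empty]
      rw [h1, h2]
    · exact hNE
  have hbond := mem_bondFinset.1 hπ
  have hPπ := hbond.ppart
  set n := Fintype.card V with hn
  set covers := (bondFinset G).filter (fun π' => BondCovers G π π') with hcovers
  set m : Finset (Finset V) → ℚ :=
    fun x => (-1 : ℚ) ^ (n - x.card) * (mu x : ℚ) with hm
  set t := π.filter (fun B => 1 < B.card) with ht
  have htc : t.card = dcount π := rfl
  have hd : dcount π ≠ 0 := by
    intro hd0
    apply hbot
    have hall : ∀ B ∈ π, B.card = 1 := by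
      intro B hB
      have h1 : ¬ 1 < B.card := by
        intro hlt
        have hmem : B ∈ t := Finset.mem_filter.2 ⟨hB, hlt⟩
        rw [← htc, Finset.card_eq_zero] at hd0
        rw [hd0] at hmem
        simp at hmem
      have h2 := Finset.card_pos.2 (hPπ.nonempty_of_mem hB)
      omega
    ext B
    constructor
    · intro hB
      obtain ⟨w, hw⟩ := Finset.card_eq_one.1 (hall B hB)
      rw [botPartition, Finset.mem_image]
      exact ⟨w, Finset.mem_univ w, hw.symm⟩
    · intro hB
      rw [botPartition, Finset.mem_image] at hB
      obtain ⟨a, -, rfl⟩ := hB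
      obtain ⟨w, hw⟩ := Finset.card_eq_one.1 (hall _ (hPπ.blk_mem a).1)
      have haw : a ∈ blk π a := (hPπ.blk_mem a).2
      rw [hw, Finset.mem_singleton] at haw
      rw [← haw] at hw
      exact hw ▸ (hPπ.blk_mem a).1
  set g : Finset (Finset V) → Finset V := fun π' => (π \ π').sup id with hg
  have hgval : ∀ π' S', π \ π' = {S'} → g π' = S' := by
    intro π' S' hsd
    rw [hg]; simp only [hsd, Finset.sup_singleton, id]
  have hmaps : ∀ π' ∈ covers, g π' ∈ t := by
    intro π' hπ'
    obtain ⟨S', B₁, B₂, hS'π, hB₁, hB₂, hB12, hdisj, hun, hsd, -, -⟩ :=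
      cover_structure (Finset.mem_filter.1 hπ').2
    rw [hgval π' S' hsd]
    have hP' := ((Finset.mem_filter.1 hπ').2).2.1.ppart
    have h1 := Finset.card_pos.2 (hP'.nonempty_of_mem hB₁)
    have h2 := Finset.card_pos.2 (hP'.nonempty_of_mem hB₂)
    have h3 := Finset.card_union_of_disjoint hdisj
    refine Finset.mem_filter.2 ⟨hS'π, ?_⟩
    rw [← hun, h3]
    omega
  have claimA : ∀ S ∈ t, ∑ π' ∈ covers.filter (fun π' => g π' = S),
      covWeight G π π' * m π' = (1 / (dcount π : ℚ)) * m π := by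
    intro S hSt
    obtain ⟨hSπ, hScard⟩ := Finset.mem_filter.1 hSt
    have heS : (0 : ℚ) < (eIn G S : ℚ) := by
      exact_mod_cast eIn_pos (hbond.2 S hSπ) hScard
    have heS' : (eIn G S : ℚ) ≠ 0 := ne_of_gt heS
    have hdQ : (dcount π : ℚ) ≠ 0 := Nat.cast_ne_zero.2 hd
    have hkey : ∀ π' ∈ covers.filter (fun π' => g π' = S),
        covWeight G π π' * m π' =
        ((1 / (dcount π : ℚ)) * (1 / (eIn G S : ℚ))) *
          ((((ES G S).filter (fun e => SepE π' e)).card : ℚ) * m π') := by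
      intro π' hπ'f
      obtain ⟨hπ'c, hgπ'⟩ := Finset.mem_filter.1 hπ'f
      obtain ⟨S', B₁, B₂, hS'π, hB₁, hB₂, hB12, hdisj, hun, hsd, hsd', -⟩ :=
        cover_structure (Finset.mem_filter.1 hπ'c).2
      have hP' := ((Finset.mem_filter.1 hπ'c).2).2.1.ppart
      have hSS' : S = S' := by rw [← hgπ', hgval π' S' hsd]
      subst hSS'
      have h11 : (if B₁ = B₁ then (0:ℚ) else (eBetween G B₁ B₁ : ℚ)) = 0 := if_pos rfl
      have h22 : (if B₂ = B₂ then (0:ℚ) else (eBetween G B₂ B₂ : ℚ)) = 0 := if_pos rfl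
      have h12 : (if B₁ = B₂ then (0:ℚ) else (eBetween G B₁ B₂ : ℚ)) =
          (eBetween G B₁ B₂ : ℚ) := if_neg hB12
      have h21 : (if B₂ = B₁ then (0:ℚ) else (eBetween G B₂ B₁ : ℚ)) =
          (eBetween G B₂ B₁ : ℚ) := if_neg (fun h => hB12 h.symm)
      have hnum : ∑ A ∈ π' \ π, ∑ B ∈ π' \ π,
          (if A = B then 0 else (eBetween G A B : ℚ)) = 2 * (eBetween G B₁ B₂ : ℚ) := by
        rw [hsd', Finset.sum_pair hB12, Finset.sum_pair hB12, Finset.sum_pair hB12,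
          h11, h22, h12, h21, eBetween_comm (B₁ := B₂) (B₂ := B₁)]
        ring
      have hden : ∑ T ∈ π \ π', (eIn G T : ℚ) = (eIn G S : ℚ) := by
        rw [hsd, Finset.sum_singleton]
      have hsep : (((ES G S).filter (fun e => SepE π' e)).card : ℚ) =
          (eBetween G B₁ B₂ : ℚ) := by
        exact_mod_cast congrArg (Nat.cast : ℕ → ℚ) (sep_filter_card hP' hB₁ hB₂ hB12 hun)
      rw [covWeight, hnum, hden, hsep]
      field_simp
    rw [Finset.sum_congr rfl hkey, ← Finset.mul_sum]
    have hfib_mem : ∀ π' ∈ covers, g π' = S ↔ S ∉ π' := by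
      intro π' hπ'c
      obtain ⟨S', B₁, B₂, hS'π, hB₁, hB₂, hB12, hdisj, hun, hsd, hsd', -⟩ :=
        cover_structure (Finset.mem_filter.1 hπ'c).2
      have hgS' := hgval π' S' hsd
      constructor
      · intro h
        rw [hgS'] at h
        have hmem : S' ∈ π \ π' := hsd ▸ Finset.mem_singleton_self S'
        exact h ▸ (Finset.mem_sdiff.1 hmem).2
      · intro h
        have hmem : S ∈ π \ π' := Finset.mem_sdiff.2 ⟨hSπ, h⟩
        rw [hsd, Finset.mem_singleton] at hmem
        rw [hgS', ← hmem]
    have hext : ∑ π' ∈ covers.filter (fun π' => g π' = S),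
        ((((ES G S).filter (fun e => SepE π' e)).card : ℚ) * m π') =
        ∑ π' ∈ covers,
        ((((ES G S).filter (fun e => SepE π' e)).card : ℚ) * m π') := by
      apply Finset.sum_subset (Finset.filter_subset _ _)
      intro π' hπ'c hnf
      have hSin : S ∈ π' := by
        by_contra hS'
        exact hnf (Finset.mem_filter.2 ⟨hπ'c, (hfib_mem π' hπ'c).2 hS'⟩)
      have hP' := ((Finset.mem_filter.1 hπ'c).2).2.1.ppart
      rw [sep_filter_empty hP' hSin]
      simp
    rw [hext]
    have hsign : ∀ π' ∈ covers,
        (((ES G S).filter (fun e => SepE π' e)).card : ℚ) * m π' =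
        (-((-1 : ℚ) ^ (n - π.card))) *
          ((((ES G S).filter (fun e => SepE π' e)).card : ℚ) * (mu π' : ℚ)) := by
      intro π' hπ'c
      have hcov := (Finset.mem_filter.1 hπ'c).2
      have hP' := hcov.2.1.ppart
      have hcard' : π'.card = π.card + 1 := hcov.2.2.2
      have hle : π'.card ≤ n := hP'.card_le_fintype
      have hexp : n - π.card = (n - π'.card) + 1 := by omega
      rw [hm]
      simp only
      rw [hexp, pow_succ]
      ring
    rw [Finset.sum_congr rfl hsign, ← Finset.mul_sum]
    have hblock := block_identity G mu hmu hπ hSπ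
    have hblockQ := congrArg (fun z : ℤ => (z : ℚ)) hblock
    push_cast at hblockQ
    have hsum : ∑ π' ∈ covers,
        ((((ES G S).filter (fun e => SepE π' e)).card : ℚ) * (mu π' : ℚ)) =
        -((eIn G S : ℚ) * (mu π : ℚ)) := by linarith [hblockQ]
    rw [hsum, hm]
    simp only
    field_simp
  have hchain : ∑ π' ∈ covers, covWeight G π π' * m π' = m π := by
    calc ∑ π' ∈ covers, covWeight G π π' * m π'
        = ∑ S ∈ t, ∑ π' ∈ covers.filter (fun π' => g π' = S),
            covWeight G π π' * m π' :=
          (Finset.sum_fiberwise_of_maps_to hmaps _).symm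
      _ = ∑ S ∈ t, (1 / (dcount π : ℚ)) * m π := Finset.sum_congr rfl claimA
      _ = (t.card : ℚ) * ((1 / (dcount π : ℚ)) * m π) := by
          rw [Finset.sum_const, nsmul_eq_mul]
      _ = m π := by
          rw [htc]
          have hdQ : (dcount π : ℚ) ≠ 0 := Nat.cast_ne_zero.2 hd
          field_simp
  exact (by exact hchain : ∑ π' ∈ covers, covWeight G π π' * m π' = m π).symm
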